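/- For every ε ∈ (0,1) there exists a constant C > 0 such that for every integer m and every real t ≥ 1 with |m − t| < ε·t, one has |J_m(t)| ≤ C · t^{−1/4} · (t^{1/3} + |m − t|)^{−1/4}. -/

import Mathlib

open MeasureTheory

/-- The Bessel function `J_m(t) = (1/2π)∫₀^{2π} e^{-imk - i t sin k} dk` for `m ∈ ℤ`. -/
noncomputable def besselJ (m : ℤ) (t : ℝ) : ℂ :=
  (1 / (2 * Real.pi)) * ∫ k in (0:ℝ)..(2 * Real.pi),
    Complex.exp (-Complex.I * m * k - Complex.I * t * Real.sin k)

open Real Set intervalIntegral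

noncomputable def E (φ : ℝ → ℝ) (x : ℝ) : ℂ := Complex.exp (Complex.I * (φ x : ℂ))

lemma norm_E (φ : ℝ → ℝ) (x : ℝ) : ‖E φ x‖ = 1 := by
  simp [E, Complex.norm_exp]

lemma continuous_E {φ : ℝ → ℝ} (hφ : Continuous φ) : Continuous (E φ) := by
  exact Complex.continuous_exp.comp (continuous_const.mul (Complex.continuous_ofReal.comp hφ))

lemma hasDerivAt_E (φ : ℝ → ℝ) {d x : ℝ} (h : HasDerivAt φ d x) :
    HasDerivAt (E φ) (Complex.I * d * E φ x) x := by
  have h1 : HasDerivAt (fun y => Complex.I * (φ y : ℂ)) (Complex.I * d) x :=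
    (h.ofReal_comp).const_mul Complex.I
  exact h1.cexp.congr_deriv (by simp only [E]; ring)

lemma osc_trivial {φ : ℝ → ℝ} {a b : ℝ} (hab : a ≤ b) :
    ‖∫ x in a..b, E φ x‖ ≤ b - a := by
  calc ‖∫ x in a..b, E φ x‖ ≤ ∫ x in a..b, ‖E φ x‖ := norm_integral_le_integral_norm hab
  _ = b - a := by
    simp only [norm_E]
    simp

lemma osc_neg (φ : ℝ → ℝ) (a b : ℝ) :
    ‖∫ x in a..b, E (fun y => -φ y) x‖ = ‖∫ x in a..b, E φ x‖ := by
  have h : ∀ x, E (fun y => -φ y) x = (starRingEnd ℂ) (E φ x) := by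
    intro x
    rw [E, E, ← Complex.exp_conj]
    congr 1
    simp [Complex.conj_ofReal]
  simp only [h]
  rw [intervalIntegral, intervalIntegral, integral_conj, integral_conj, ← map_sub]
  exact RCLike.norm_conj _

lemma vdc1_pos (φ φ' φ'' : ℝ → ℝ) (hd1 : ∀ x, HasDerivAt φ (φ' x) x)
    (hd2 : ∀ x, HasDerivAt φ' (φ'' x) x) (hc2 : Continuous φ'')
    {a b lam : ℝ} (hab : a ≤ b) (hlam : 0 < lam)
    (hlo : ∀ x ∈ Icc a b, lam ≤ φ' x)
    (hsgn : (∀ x ∈ Icc a b, 0 ≤ φ'' x) ∨ (∀ x ∈ Icc a b, φ'' x ≤ 0)) :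
    ‖∫ x in a..b, E φ x‖ ≤ 3 / lam := by
  have hc1 : Continuous φ' := by
    rw [continuous_iff_continuousAt]; exact fun x => (hd2 x).continuousAt
  have hc0 : Continuous φ := by
    rw [continuous_iff_continuousAt]; exact fun x => (hd1 x).continuousAt
  have huIcc : uIcc a b = Icc a b := uIcc_of_le hab
  have hpos : ∀ x ∈ Icc a b, 0 < φ' x := fun x hx => lt_of_lt_of_le hlam (hlo x hx)
  set g : ℝ → ℂ := fun x => E φ x * (-Complex.I) * (((φ' x)⁻¹ : ℝ) : ℂ) with hg_def
  set F : ℝ → ℂ := fun x => Complex.I * E φ x * ((φ'' x / (φ' x)^2 : ℝ) : ℂ) with hF_def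
  have hderiv : ∀ x ∈ uIcc a b, HasDerivAt g (E φ x + F x) x := by
    intro x hx
    rw [huIcc] at hx
    have hne : φ' x ≠ 0 := ne_of_gt (hpos x hx)
    have h1 : HasDerivAt (fun y => E φ y * (-Complex.I))
        (Complex.I * (φ' x) * E φ x * (-Complex.I)) x := (hasDerivAt_E φ (hd1 x)).mul_const _
    have h2 : HasDerivAt (fun y => (((φ' y)⁻¹ : ℝ) : ℂ))
        ((-(φ'' x) / (φ' x)^2 : ℝ) : ℂ) x := ((hd2 x).inv hne).ofReal_comp
    have h3 := h1.mul h2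
    refine h3.congr_deriv (Eq.symm ?_)
    have e1 : ((φ' x : ℝ) : ℂ) * (((φ' x)⁻¹ : ℝ) : ℂ) = 1 := by
      rw [← Complex.ofReal_mul, mul_inv_cancel₀ hne, Complex.ofReal_one]
    simp only [hF_def, neg_div, Complex.ofReal_neg]
    linear_combination (Complex.I * Complex.I * E φ x) * e1 + (E φ x) * Complex.I_mul_I
  have hintE : IntervalIntegrable (E φ) volume a b := (continuous_E hc0).intervalIntegrable a b
  have hcq : ContinuousOn (fun x => φ'' x / (φ' x)^2) (Icc a b) := by
    apply ContinuousOn.div hc2.continuousOn ((hc1.pow 2).continuousOn)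
    intro x hx
    exact pow_ne_zero 2 (ne_of_gt (hpos x hx))
  have hcF : ContinuousOn F (uIcc a b) := by
    rw [huIcc]
    exact (continuous_const.mul (continuous_E hc0)).continuousOn.mul
      (Complex.continuous_ofReal.comp_continuousOn hcq)
  have hintF : IntervalIntegrable F volume a b := hcF.intervalIntegrable
  have hftc : ∫ x in a..b, (E φ x + F x) = g b - g a :=
    integral_eq_sub_of_hasDerivAt hderiv (hintE.add hintF)
  have hsplit : ∫ x in a..b, E φ x = g b - g a - ∫ x in a..b, F x := by
    rw [← hftc, integral_add hintE hintF]; ring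
  -- FTC for 1/φ'
  have hG : ∀ x ∈ uIcc a b, HasDerivAt (fun y => -(φ' y)⁻¹) (φ'' x / (φ' x)^2) x := by
    intro x hx
    rw [huIcc] at hx
    have := ((hd2 x).inv (ne_of_gt (hpos x hx))).neg
    exact this.congr_deriv (by ring)
  have hftc2 : ∫ x in a..b, φ'' x / (φ' x)^2 = (φ' a)⁻¹ - (φ' b)⁻¹ := by
    rw [integral_eq_sub_of_hasDerivAt hG (huIcc ▸ hcq).intervalIntegrable]
    ring
  have hinva : (φ' a)⁻¹ ≤ lam⁻¹ := inv_anti₀ hlam (hlo a ⟨le_refl a, hab⟩)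
  have hinvb : (φ' b)⁻¹ ≤ lam⁻¹ := inv_anti₀ hlam (hlo b ⟨hab, le_refl b⟩)
  have hinva0 : 0 < (φ' a)⁻¹ := inv_pos.mpr (hpos a ⟨le_refl a, hab⟩)
  have hinvb0 : 0 < (φ' b)⁻¹ := inv_pos.mpr (hpos b ⟨hab, le_refl b⟩)
  have hFbound : ‖∫ x in a..b, F x‖ ≤ lam⁻¹ := by
    calc ‖∫ x in a..b, F x‖ ≤ ∫ x in a..b, ‖F x‖ := norm_integral_le_integral_norm hab
    _ = ∫ x in a..b, |φ'' x / (φ' x)^2| := by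
        apply integral_congr
        intro x hx
        show ‖F x‖ = _
        rw [hF_def]
        simp only [norm_mul, Complex.norm_I, norm_E, Complex.norm_real, Real.norm_eq_abs,
          one_mul, mul_one]
    _ ≤ lam⁻¹ := by
        rcases hsgn with hs | hs
        · have he : ∫ x in a..b, |φ'' x / (φ' x)^2| = ∫ x in a..b, φ'' x / (φ' x)^2 := by
            apply integral_congr
            intro x hx
            rw [huIcc] at hx
            show |φ'' x / (φ' x)^2| = _
            rw [abs_of_nonneg (div_nonneg (hs x hx) (sq_nonneg _))]
          rw [he, hftc2]; linarith
        · have he : ∫ x in a..b, |φ'' x / (φ' x)^2| = ∫ x in a..b, -(φ'' x / (φ' x)^2) := by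
            apply integral_congr
            intro x hx
            rw [huIcc] at hx
            show |φ'' x / (φ' x)^2| = _
            rw [abs_of_nonpos (div_nonpos_of_nonpos_of_nonneg (hs x hx) (sq_nonneg _))]
          rw [he, intervalIntegral.integral_neg, hftc2]; linarith
  have hgnorm : ∀ x ∈ Icc a b, ‖g x‖ ≤ lam⁻¹ := by
    intro x hx
    rw [hg_def]
    simp only [norm_mul, norm_E, norm_neg, Complex.norm_I, Complex.norm_real,
      Real.norm_eq_abs, one_mul, mul_one]
    rw [abs_of_pos (inv_pos.mpr (hpos x hx))]
    exact inv_anti₀ hlam (hlo x hx)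
  rw [hsplit]
  have h1 := hgnorm a ⟨le_refl a, hab⟩
  have h2 := hgnorm b ⟨hab, le_refl b⟩
  calc ‖g b - g a - ∫ x in a..b, F x‖ ≤ ‖g b - g a‖ + ‖∫ x in a..b, F x‖ := norm_sub_le _ _
  _ ≤ (‖g b‖ + ‖g a‖) + ‖∫ x in a..b, F x‖ := by gcongr; exact norm_sub_le _ _
  _ ≤ lam⁻¹ + lam⁻¹ + lam⁻¹ := by gcongr
  _ = 3 / lam := by rw [div_eq_mul_inv]; ring

lemma vdc1 (φ φ' φ'' : ℝ → ℝ) (hd1 : ∀ x, HasDerivAt φ (φ' x) x)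
    (hd2 : ∀ x, HasDerivAt φ' (φ'' x) x) (hc2 : Continuous φ'')
    {a b lam : ℝ} (hab : a ≤ b) (hlam : 0 < lam)
    (hdir : (∀ x ∈ Icc a b, lam ≤ φ' x) ∨ (∀ x ∈ Icc a b, φ' x ≤ -lam))
    (hsgn : (∀ x ∈ Icc a b, 0 ≤ φ'' x) ∨ (∀ x ∈ Icc a b, φ'' x ≤ 0)) :
    ‖∫ x in a..b, E φ x‖ ≤ 3 / lam := by
  rcases hdir with h | h
  · exact vdc1_pos φ φ' φ'' hd1 hd2 hc2 hab hlam h hsgn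
  · have hosc : ‖∫ x in a..b, E φ x‖ = ‖∫ x in a..b, E (fun y => -φ y) x‖ := by
      rw [← osc_neg (fun y => -φ y) a b]
      simp only [neg_neg]
    rw [hosc]
    apply vdc1_pos (fun y => -φ y) (fun y => -φ' y) (fun y => -φ'' y)
      (fun x => (hd1 x).neg) (fun x => (hd2 x).neg) hc2.neg hab hlam
    · intro x hx
      have := h x hx
      simp only [le_neg]
      linarith
    · rcases hsgn with hs | hs
      · exact Or.inr fun x hx => neg_nonpos.mpr (hs x hx)
      · exact Or.inl fun x hx => neg_nonneg.mpr (hs x hx)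

lemma vdc2_pos (φ φ' φ'' : ℝ → ℝ) (hd1 : ∀ x, HasDerivAt φ (φ' x) x)
    (hd2 : ∀ x, HasDerivAt φ' (φ'' x) x) (hc2 : Continuous φ'')
    {a b lam : ℝ} (hab : a ≤ b) (hlam : 0 < lam)
    (hlo : ∀ x ∈ Icc a b, lam ≤ φ'' x) :
    ‖∫ x in a..b, E φ x‖ ≤ 8 / Real.sqrt lam := by
  have hc1 : Continuous φ' := by
    rw [continuous_iff_continuousAt]; exact fun x => (hd2 x).continuousAt
  have hc0 : Continuous φ := by
    rw [continuous_iff_continuousAt]; exact fun x => (hd1 x).continuousAt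
  have hsq : 0 < Real.sqrt lam := Real.sqrt_pos.mpr hlam
  set δ : ℝ := (Real.sqrt lam)⁻¹ with hδ
  have hδ0 : 0 < δ := inv_pos.mpr hsq
  have hlamδ : lam * δ = Real.sqrt lam := by
    rw [hδ]
    rw [← Real.mul_self_sqrt hlam.le]
    field_simp
    rw [Real.sqrt_sq hsq.le]
  have key : ∀ x ∈ Icc a b, ∀ y ∈ Icc a b, x ≤ y → φ' x + lam * (y - x) ≤ φ' y := by
    intro x hx y hy hxy
    have hint : ∫ s in x..y, φ'' s = φ' y - φ' x :=
      integral_eq_sub_of_hasDerivAt (fun s _ => hd2 s) (hc2.intervalIntegrable x y)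
    have hmono : ∫ s in x..y, (lam : ℝ) ≤ ∫ s in x..y, φ'' s := by
      apply integral_mono_on hxy intervalIntegrable_const (hc2.intervalIntegrable x y)
      intro s hs
      exact hlo s ⟨le_trans hx.1 hs.1, le_trans hs.2 hy.2⟩
    rw [hint, intervalIntegral.integral_const, smul_eq_mul] at hmono
    linarith
  obtain ⟨c, hc, hup, hdn⟩ : ∃ c ∈ Icc a b,
      (∀ x ∈ Icc a b, c < x → lam * (x - c) ≤ φ' x) ∧
      (∀ x ∈ Icc a b, x < c → φ' x ≤ -(lam * (c - x))) := by
    rcases le_or_gt 0 (φ' a) with h0 | h0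
    · refine ⟨a, ⟨le_refl a, hab⟩, fun x hx hax => ?_,
        fun x hx hxa => absurd hx.1 (not_le.mpr hxa)⟩
      have := key a ⟨le_refl a, hab⟩ x hx hax.le
      linarith
    · rcases le_or_gt (φ' b) 0 with h1 | h1
      · refine ⟨b, ⟨hab, le_refl b⟩, fun x hx hbx => absurd hx.2 (not_le.mpr hbx),
          fun x hx hxb => ?_⟩
        have := key x hx b ⟨hab, le_refl b⟩ hxb.le
        linarith
      · obtain ⟨c, hcmem, hc0⟩ := intermediate_value_Icc hab hc1.continuousOn ⟨h0.le, h1.le⟩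
        refine ⟨c, hcmem, fun x hx hcx => ?_, fun x hx hxc => ?_⟩
        · have := key c hcmem x hx hcx.le; rw [hc0] at this; linarith
        · have := key x hx c hcmem hxc.le; rw [hc0] at this; linarith
  set a' := max a (c - δ) with ha'def
  set b' := min b (c + δ) with hb'def
  have haa' : a ≤ a' := le_max_left _ _
  have ha'b' : a' ≤ b' := by
    apply max_le (le_min hab (le_trans hc.1 (by linarith)))
    exact le_min (le_trans (by linarith) hc.2) (by linarith)
  have hb'b : b' ≤ b := min_le_left _ _
  have hint : ∀ u v : ℝ, IntervalIntegrable (E φ) volume u v :=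
    fun u v => (continuous_E hc0).intervalIntegrable u v
  have hsplit : ∫ x in a..b, E φ x =
      (∫ x in a..a', E φ x) + (∫ x in a'..b', E φ x) + ∫ x in b'..b, E φ x := by
    rw [integral_add_adjacent_intervals (hint a a') (hint a' b'),
      integral_add_adjacent_intervals (hint a b') (hint b' b)]
  have hleft : ‖∫ x in a..a', E φ x‖ ≤ 3 / Real.sqrt lam := by
    rcases le_or_gt (c - δ) a with h | h
    · rw [show a' = a from max_eq_left h, integral_same, norm_zero]
      positivity
    · rw [show a' = c - δ from max_eq_right h.le]
      apply vdc1 φ φ' φ'' hd1 hd2 hc2 h.le hsq (Or.inr ?_) (Or.inl ?_)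
      · intro x hx
        have hxm : x ∈ Icc a b := ⟨hx.1, le_trans hx.2 (by linarith [hc.2])⟩
        have h2 := hdn x hxm (by linarith [hx.2])
        have h3 : lam * δ ≤ lam * (c - x) := by
          apply mul_le_mul_of_nonneg_left _ hlam.le
          linarith [hx.2]
        rw [← hlamδ]
        linarith
      · intro x hx
        have hxm : x ∈ Icc a b := ⟨hx.1, le_trans hx.2 (by linarith [hc.2])⟩
        linarith [hlo x hxm]
  have hright : ‖∫ x in b'..b, E φ x‖ ≤ 3 / Real.sqrt lam := by
    rcases le_or_gt b (c + δ) with h | h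
    · rw [show b' = b from min_eq_left h, integral_same, norm_zero]
      positivity
    · rw [show b' = c + δ from min_eq_right h.le]
      apply vdc1 φ φ' φ'' hd1 hd2 hc2 h.le hsq (Or.inl ?_) (Or.inl ?_)
      · intro x hx
        have hxm : x ∈ Icc a b := ⟨le_trans (by linarith [hc.1]) hx.1, hx.2⟩
        have h2 := hup x hxm (by linarith [hx.1])
        have h3 : lam * δ ≤ lam * (x - c) := by
          apply mul_le_mul_of_nonneg_left _ hlam.le
          linarith [hx.1]
        rw [← hlamδ]
        linarith
      · intro x hx
        have hxm : x ∈ Icc a b := ⟨le_trans (by linarith [hc.1]) hx.1, hx.2⟩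
        linarith [hlo x hxm]
  have hmid : ‖∫ x in a'..b', E φ x‖ ≤ 2 / Real.sqrt lam := by
    have h1 : ‖∫ x in a'..b', E φ x‖ ≤ b' - a' := osc_trivial ha'b'
    have h2 : b' - a' ≤ 2 * δ := by
      have : c - δ ≤ a' := le_max_right _ _
      have : b' ≤ c + δ := min_le_right _ _
      linarith [le_max_right a (c - δ), min_le_right b (c + δ)]
    rw [hδ] at h2
    calc ‖∫ x in a'..b', E φ x‖ ≤ 2 * (Real.sqrt lam)⁻¹ := le_trans h1 h2
    _ = 2 / Real.sqrt lam := by ring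
  rw [hsplit]
  calc ‖(∫ x in a..a', E φ x) + (∫ x in a'..b', E φ x) + ∫ x in b'..b, E φ x‖
      ≤ ‖∫ x in a..a', E φ x‖ + ‖∫ x in a'..b', E φ x‖ + ‖∫ x in b'..b, E φ x‖ :=
        norm_add₃_le
  _ ≤ 3 / Real.sqrt lam + 2 / Real.sqrt lam + 3 / Real.sqrt lam := by
      gcongr
  _ = 8 / Real.sqrt lam := by ring

lemma vdc2 (φ φ' φ'' : ℝ → ℝ) (hd1 : ∀ x, HasDerivAt φ (φ' x) x)
    (hd2 : ∀ x, HasDerivAt φ' (φ'' x) x) (hc2 : Continuous φ'')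
    {a b lam : ℝ} (hab : a ≤ b) (hlam : 0 < lam)
    (hdir : (∀ x ∈ Icc a b, lam ≤ φ'' x) ∨ (∀ x ∈ Icc a b, φ'' x ≤ -lam)) :
    ‖∫ x in a..b, E φ x‖ ≤ 8 / Real.sqrt lam := by
  rcases hdir with h | h
  · exact vdc2_pos φ φ' φ'' hd1 hd2 hc2 hab hlam h
  · have hosc : ‖∫ x in a..b, E φ x‖ = ‖∫ x in a..b, E (fun y => -φ y) x‖ := by
      rw [← osc_neg (fun y => -φ y) a b]
      simp only [neg_neg]
    rw [hosc]
    apply vdc2_pos (fun y => -φ y) (fun y => -φ' y) (fun y => -φ'' y)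
      (fun x => (hd1 x).neg) (fun x => (hd2 x).neg) hc2.neg hab hlam
    intro x hx
    have := h x hx
    linarith

/-- splitting -/
lemma osc_split {φ : ℝ → ℝ} (hφ : Continuous φ) (a x b : ℝ) :
    ‖∫ y in a..b, E φ y‖ ≤ ‖∫ y in a..x, E φ y‖ + ‖∫ y in x..b, E φ y‖ := by
  rw [← integral_add_adjacent_intervals ((continuous_E hφ).intervalIntegrable a x)
    ((continuous_E hφ).intervalIntegrable x b)]
  exact norm_add_le _ _

/-- The phase function. -/
noncomputable def P (μ t : ℝ) : ℝ → ℝ := fun k => -(μ * k + t * Real.sin k)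
noncomputable def P' (μ t : ℝ) : ℝ → ℝ := fun k => -(μ + t * Real.cos k)
noncomputable def P'' (μ t : ℝ) : ℝ → ℝ := fun k => t * Real.sin k

lemma hd1P (μ t : ℝ) : ∀ x, HasDerivAt (P μ t) (P' μ t x) x := by
  intro x
  unfold P P'
  have h : HasDerivAt (fun k => μ * k + t * Real.sin k) (μ * 1 + t * Real.cos x) x :=
    ((hasDerivAt_id x).const_mul μ).add ((Real.hasDerivAt_sin x).const_mul t)
  refine h.neg.congr_deriv ?_
  ring

lemma hd2P (μ t : ℝ) : ∀ x, HasDerivAt (P' μ t) (P'' μ t x) x := by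
  intro x
  unfold P' P''
  have h : HasDerivAt (fun k => μ + t * Real.cos k) (0 + t * (-Real.sin x)) x :=
    (hasDerivAt_const x μ).add ((Real.hasDerivAt_cos x).const_mul t)
  refine h.neg.congr_deriv ?_
  ring

lemma hc2P (μ t : ℝ) : Continuous (P'' μ t) := continuous_const.mul Real.continuous_sin

lemma hcP (μ t : ℝ) : Continuous (P μ t) := by
  unfold P; fun_prop

/-- piece [0, π/2] -/
lemma piece01 {ε μ t : ℝ} (hε1 : ε < 1) (ht0 : 0 < t) (hμ : (1 - ε) * t ≤ μ) :
    ‖∫ x in (0:ℝ)..(π/2), E (P μ t) x‖ ≤ 3 / ((1 - ε) * t) := by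
  have hπ := Real.pi_pos
  apply vdc1 (P μ t) (P' μ t) (P'' μ t) (hd1P μ t) (hd2P μ t) (hc2P μ t)
    (by linarith) (by nlinarith) (Or.inr ?_) (Or.inl ?_)
  · intro x hx
    have hcos : 0 ≤ Real.cos x := Real.cos_nonneg_of_mem_Icc ⟨by linarith [hx.1], hx.2⟩
    have : (1 - ε) * t ≤ μ + t * Real.cos x := by nlinarith
    simp only [P']
    linarith
  · intro x hx
    have : 0 ≤ Real.sin x := Real.sin_nonneg_of_nonneg_of_le_pi hx.1 (by linarith [hx.2])
    simp only [P'']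
    nlinarith

/-- piece [3π/2, 2π] -/
lemma piece52 {ε μ t : ℝ} (hε1 : ε < 1) (ht0 : 0 < t) (hμ : (1 - ε) * t ≤ μ) :
    ‖∫ x in (3*π/2)..(2*π), E (P μ t) x‖ ≤ 3 / ((1 - ε) * t) := by
  have hπ := Real.pi_pos
  apply vdc1 (P μ t) (P' μ t) (P'' μ t) (hd1P μ t) (hd2P μ t) (hc2P μ t)
    (by linarith) (by nlinarith) (Or.inr ?_) (Or.inr ?_)
  · intro x hx
    have h1 : Real.cos x = Real.cos (2*π - x) := (Real.cos_two_pi_sub x).symm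
    have hcos : 0 ≤ Real.cos (2*π - x) :=
      Real.cos_nonneg_of_mem_Icc ⟨by linarith [hx.2], by linarith [hx.1]⟩
    have : (1 - ε) * t ≤ μ + t * Real.cos x := by rw [h1]; nlinarith
    simp only [P']
    linarith
  · intro x hx
    have h1 : Real.sin x = -Real.sin (x - π) := by rw [Real.sin_sub_pi]; ring
    have : 0 ≤ Real.sin (x - π) :=
      Real.sin_nonneg_of_nonneg_of_le_pi (by linarith [hx.1]) (by linarith [hx.2])
    simp only [P'']
    nlinarith

/-- oscillatory piece [π/2, π - r], for 0 < r ≤ 1 -/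
lemma pieceOsc1 {μ t r : ℝ} (ht0 : 0 < t) (hr0 : 0 < r) (hr1 : r ≤ 1) :
    ‖∫ x in (π/2)..(π - r), E (P μ t) x‖ ≤ 8 / Real.sqrt (t * r / 2) := by
  have hπ := Real.pi_gt_three
  have hπ4 := Real.pi_lt_d2
  apply vdc2 (P μ t) (P' μ t) (P'' μ t) (hd1P μ t) (hd2P μ t) (hc2P μ t)
    (by linarith) (by positivity) (Or.inl ?_)
  intro x hx
  have hsin : Real.sin r ≤ Real.sin x := by
    rw [show Real.sin x = Real.sin (π - x) from (Real.sin_pi_sub x).symm]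
    apply Real.strictMonoOn_sin.monotoneOn ⟨by linarith, by linarith⟩
      ⟨by linarith [hx.2, hr0], by linarith [hx.1]⟩ (by linarith [hx.2])
  have hrs : r / 2 ≤ Real.sin r := by
    have h1 := Real.mul_le_sin hr0.le (by linarith)
    have h2 : (1:ℝ)/2 ≤ 2/π := by
      rw [div_le_div_iff₀ two_pos (by linarith)]
      linarith
    nlinarith
  simp only [P'']
  nlinarith

/-- oscillatory piece [π + r, 3π/2], for 0 < r ≤ 1 -/
lemma pieceOsc2 {μ t r : ℝ} (ht0 : 0 < t) (hr0 : 0 < r) (hr1 : r ≤ 1) :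
    ‖∫ x in (π + r)..(3*π/2), E (P μ t) x‖ ≤ 8 / Real.sqrt (t * r / 2) := by
  have hπ := Real.pi_gt_three
  have hπ4 := Real.pi_lt_d2
  apply vdc2 (P μ t) (P' μ t) (P'' μ t) (hd1P μ t) (hd2P μ t) (hc2P μ t)
    (by linarith) (by positivity) (Or.inr ?_)
  intro x hx
  have hsin : Real.sin r ≤ Real.sin (x - π) := by
    apply Real.strictMonoOn_sin.monotoneOn ⟨by linarith, by linarith⟩
      ⟨by linarith [hx.1], by linarith [hx.2]⟩ (by linarith [hx.1])
  have hrs : r / 2 ≤ Real.sin r := by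
    have h1 := Real.mul_le_sin hr0.le (by linarith)
    have h2 : (1:ℝ)/2 ≤ 2/π := by
      rw [div_le_div_iff₀ two_pos (by linarith)]
      linarith
    nlinarith
  have h1 : Real.sin x = -Real.sin (x - π) := by rw [Real.sin_sub_pi]; ring
  simp only [P'']
  nlinarith

/-- For t ≤ μ: [π/2, π] -/
lemma pieceNeg1 {μ t : ℝ} (ht0 : 0 < t) (hμt : t ≤ μ) (hD : 0 < μ - t) :
    ‖∫ x in (π/2)..π, E (P μ t) x‖ ≤ 3 / (μ - t) := by
  have hπ := Real.pi_gt_three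
  apply vdc1 (P μ t) (P' μ t) (P'' μ t) (hd1P μ t) (hd2P μ t) (hc2P μ t)
    (by linarith) hD (Or.inr ?_) (Or.inl ?_)
  · intro x hx
    have := Real.neg_one_le_cos x
    simp only [P']
    nlinarith
  · intro x hx
    have : 0 ≤ Real.sin x := Real.sin_nonneg_of_nonneg_of_le_pi (by linarith [hx.1]) hx.2
    simp only [P'']
    nlinarith

/-- For t ≤ μ: [π, 3π/2] -/
lemma pieceNeg2 {μ t : ℝ} (ht0 : 0 < t) (hμt : t ≤ μ) (hD : 0 < μ - t) :
    ‖∫ x in π..(3*π/2), E (P μ t) x‖ ≤ 3 / (μ - t) := by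
  have hπ := Real.pi_gt_three
  apply vdc1 (P μ t) (P' μ t) (P'' μ t) (hd1P μ t) (hd2P μ t) (hc2P μ t)
    (by linarith) hD (Or.inr ?_) (Or.inr ?_)
  · intro x hx
    have := Real.neg_one_le_cos x
    simp only [P']
    nlinarith
  · intro x hx
    have h1 : Real.sin x = -Real.sin (x - π) := by rw [Real.sin_sub_pi]; ring
    have : 0 ≤ Real.sin (x - π) :=
      Real.sin_nonneg_of_nonneg_of_le_pi (by linarith [hx.1]) (by linarith [hx.2])
    simp only [P'']
    nlinarith

/-- For μ < t, near the stationary point: [π - a0, π] where a0 = √((t-μ)/t) -/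
lemma pieceStat1 {μ t : ℝ} (ht0 : 0 < t) (hμt : μ < t) (ha1 : Real.sqrt ((t - μ)/t) ≤ 1) :
    ‖∫ x in (π - Real.sqrt ((t - μ)/t))..π, E (P μ t) x‖ ≤ 6 / (t - μ) := by
  have hπ := Real.pi_gt_three
  set a0 := Real.sqrt ((t - μ)/t) with ha0
  have hD : 0 < t - μ := by linarith
  have ha00 : 0 ≤ a0 := Real.sqrt_nonneg _
  have ha0sq : a0^2 = (t - μ)/t := Real.sq_sqrt (by positivity)
  have hta0 : t * a0^2 = t - μ := by rw [ha0sq]; field_simp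
  have h62 : (6:ℝ) / (t - μ) = 3 / ((t - μ)/2) := by field_simp; ring
  rw [h62]
  apply vdc1 (P μ t) (P' μ t) (P'' μ t) (hd1P μ t) (hd2P μ t) (hc2P μ t)
    (by linarith) (by linarith) (Or.inl ?_) (Or.inl ?_)
  · intro x hx
    have hcx : Real.cos x ≤ Real.cos (π - a0) := by
      apply Real.cos_le_cos_of_nonneg_of_le_pi (by linarith [ha1]) (by linarith [hx.2]) hx.1
    rw [Real.cos_pi_sub] at hcx
    have hca : 1 - a0^2/2 ≤ Real.cos a0 := Real.one_sub_sq_div_two_le_cos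
    have : μ + t * Real.cos x ≤ -(t - μ)/2 := by nlinarith
    simp only [P']
    linarith
  · intro x hx
    have : 0 ≤ Real.sin x :=
      Real.sin_nonneg_of_nonneg_of_le_pi (by linarith [hx.1, ha1]) hx.2
    simp only [P'']
    nlinarith

/-- For μ < t, near the stationary point: [π, π + a0] -/
lemma pieceStat2 {μ t : ℝ} (ht0 : 0 < t) (hμt : μ < t) (ha1 : Real.sqrt ((t - μ)/t) ≤ 1) :
    ‖∫ x in π..(π + Real.sqrt ((t - μ)/t)), E (P μ t) x‖ ≤ 6 / (t - μ) := by
  have hπ := Real.pi_gt_three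
  set a0 := Real.sqrt ((t - μ)/t) with ha0
  have hD : 0 < t - μ := by linarith
  have ha00 : 0 ≤ a0 := Real.sqrt_nonneg _
  have ha0sq : a0^2 = (t - μ)/t := Real.sq_sqrt (by positivity)
  have hta0 : t * a0^2 = t - μ := by rw [ha0sq]; field_simp
  have h62 : (6:ℝ) / (t - μ) = 3 / ((t - μ)/2) := by field_simp; ring
  rw [h62]
  apply vdc1 (P μ t) (P' μ t) (P'' μ t) (hd1P μ t) (hd2P μ t) (hc2P μ t)
    (by linarith) (by linarith) (Or.inl ?_) (Or.inr ?_)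
  · intro x hx
    have hcc : Real.cos x = Real.cos (2*π - x) := (Real.cos_two_pi_sub x).symm
    have hcx : Real.cos (2*π - x) ≤ Real.cos (π - a0) := by
      apply Real.cos_le_cos_of_nonneg_of_le_pi (by linarith [ha1]) (by linarith [hx.1])
        (by linarith [hx.2])
    rw [Real.cos_pi_sub] at hcx
    have hca : 1 - a0^2/2 ≤ Real.cos a0 := Real.one_sub_sq_div_two_le_cos
    have : μ + t * Real.cos x ≤ -(t - μ)/2 := by rw [hcc]; nlinarith
    simp only [P']
    linarith
  · intro x hx
    have h1 : Real.sin x = -Real.sin (x - π) := by rw [Real.sin_sub_pi]; ring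
    have : 0 ≤ Real.sin (x - π) :=
      Real.sin_nonneg_of_nonneg_of_le_pi (by linarith [hx.1]) (by linarith [hx.2])
    simp only [P'']
    nlinarith

lemma sqrt2_le : Real.sqrt 2 ≤ 1.5 := by
  rw [show (1.5:ℝ) = Real.sqrt (1.5^2) from (Real.sqrt_sq (by norm_num)).symm]
  exact Real.sqrt_le_sqrt (by norm_num)

lemma boundA {ε μ t : ℝ} (hε0 : 0 < ε) (hε1 : ε < 1) (ht : 1 ≤ t) (hμ : (1 - ε) * t ≤ μ) :
    ‖∫ x in (0:ℝ)..(2*π), E (P μ t) x‖ ≤ 32 * (1-ε)⁻¹ * t ^ (-(1/3) : ℝ) := by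
  have hπ := Real.pi_gt_three
  have ht0 : (0:ℝ) < t := by linarith
  have h1e : (0:ℝ) < 1 - ε := by linarith
  set b0 := t ^ (-(1/3):ℝ) with hb0
  have hb0pos : 0 < b0 := Real.rpow_pos_of_pos ht0 _
  have hb01 : b0 ≤ 1 := Real.rpow_le_one_of_one_le_of_nonpos ht (by norm_num)
  have hcP' := hcP μ t
  have s1 := osc_split hcP' 0 (π/2) (2*π)
  have s2 := osc_split hcP' (π/2) (π - b0) (2*π)
  have s3 := osc_split hcP' (π - b0) (π + b0) (2*π)
  have s4 := osc_split hcP' (π + b0) (3*π/2) (2*π)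
  have p1 := piece01 hε1 ht0 hμ
  have p2 := pieceOsc1 (μ := μ) ht0 hb0pos hb01
  have p3 : ‖∫ x in (π - b0)..(π + b0), E (P μ t) x‖ ≤ 2 * b0 := by
    have := osc_trivial (φ := P μ t) (a := π - b0) (b := π + b0) (by linarith)
    linarith
  have p4 := pieceOsc2 (μ := μ) ht0 hb0pos hb01
  have p5 := piece52 hε1 ht0 hμ
  have htot : ‖∫ x in (0:ℝ)..(2*π), E (P μ t) x‖ ≤
      3/((1-ε)*t) + 8 / Real.sqrt (t * b0 / 2) + 2*b0 + 8 / Real.sqrt (t * b0 / 2)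
        + 3/((1-ε)*t) := by
    linarith [s1, s2, s3, s4, p1, p2, p3, p4, p5]
  -- numerics
  have e1 : t * b0 = t ^ ((2:ℝ)/3) := by
    rw [hb0]
    nth_rewrite 1 [← Real.rpow_one t]
    rw [← Real.rpow_add ht0]
    norm_num
  have e2 : Real.sqrt (t * b0 / 2) = t ^ ((1:ℝ)/3) / Real.sqrt 2 := by
    rw [e1, Real.sqrt_div (by positivity) 2]
    congr 1
    rw [Real.sqrt_eq_rpow, ← Real.rpow_mul ht0.le]
    norm_num
  have e4 : (t ^ ((1:ℝ)/3))⁻¹ = b0 := by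
    rw [hb0, ← Real.rpow_neg ht0.le]
  have e5 : (8:ℝ) / Real.sqrt (t * b0 / 2) ≤ 12 * b0 := by
    rw [e2, div_div_eq_mul_div, div_eq_mul_inv, e4]
    nlinarith [hb0pos, sqrt2_le, Real.sqrt_nonneg 2]
  have h1t : t⁻¹ ≤ b0 := by
    rw [hb0, ← Real.rpow_neg_one t]
    exact Real.rpow_le_rpow_of_exponent_le ht (by norm_num)
  have e6 : 3/((1-ε)*t) ≤ 3 * (1-ε)⁻¹ * b0 := by
    rw [div_eq_mul_inv, mul_inv, ← mul_assoc]
    exact mul_le_mul_of_nonneg_left h1t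
      (mul_nonneg (by norm_num) (inv_nonneg.mpr h1e.le))
  have hK : 1 ≤ (1-ε)⁻¹ := by
    rw [← one_div, le_div_iff₀ h1e]
    nlinarith
  have e9 : b0 ≤ (1-ε)⁻¹ * b0 := le_mul_of_one_le_left hb0pos.le hK
  linarith [htot, e5, e6, e9]

lemma rpow4_eq (D : ℝ) (hD0 : 0 < D) : (D^4) ^ ((1:ℝ)/4) = D := by
  rw [← Real.rpow_natCast D 4, ← Real.rpow_mul hD0.le]
  norm_num

set_option maxHeartbeats 1000000 in
lemma boundB1 {ε μ t : ℝ} (hε0 : 0 < ε) (hε1 : ε < 1) (ht : 1 ≤ t) (hμ : (1 - ε) * t ≤ μ)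
    (hts : t ≤ μ) (hD : t ^ ((1:ℝ)/3) < μ - t) (hDε : μ - t ≤ ε * t) :
    ‖∫ x in (0:ℝ)..(2*π), E (P μ t) x‖ ≤
      12 * (1-ε)⁻¹ * (t * (μ - t)) ^ (-(1/4) : ℝ) := by
  have hπ := Real.pi_gt_three
  have ht0 : (0:ℝ) < t := by linarith
  have h1e : (0:ℝ) < 1 - ε := by linarith
  set D := μ - t with hDdef
  have ht3 : (1:ℝ) ≤ t ^ ((1:ℝ)/3) := by
    have := Real.rpow_le_rpow zero_le_one ht (by norm_num : (0:ℝ) ≤ 1/3)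
    simpa using this
  have hD1 : 1 ≤ D := by linarith
  have hD0 : 0 < D := by linarith
  have hcube : t ≤ D^3 := by
    have h3 : (t ^ ((1:ℝ)/3))^3 = t := by
      rw [← Real.rpow_natCast (t ^ ((1:ℝ)/3)) 3, ← Real.rpow_mul ht0.le]
      norm_num
    have h4 : (t ^ ((1:ℝ)/3))^3 ≤ D^3 :=
      pow_le_pow_left₀ (by positivity) hD.le 3
    calc t = (t ^ ((1:ℝ)/3))^3 := h3.symm
    _ ≤ D^3 := h4
  set M := (t * D) ^ (-(1/4) : ℝ) with hM
  have hM0 : 0 < M := Real.rpow_pos_of_pos (by positivity) _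
  have hMeq : M = ((t*D) ^ ((1:ℝ)/4))⁻¹ := by
    rw [hM, ← Real.rpow_neg (by positivity)]
  have key1 : D⁻¹ ≤ M := by
    rw [hMeq]
    apply inv_anti₀ (Real.rpow_pos_of_pos (by positivity) _)
    calc (t*D) ^ ((1:ℝ)/4) ≤ (D^4) ^ ((1:ℝ)/4) :=
          Real.rpow_le_rpow (by positivity) (by nlinarith) (by norm_num)
    _ = D := rpow4_eq D hD0
  have key2 : t⁻¹ ≤ M := by
    rw [hMeq]
    apply inv_anti₀ (Real.rpow_pos_of_pos (by positivity) _)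
    have hDt : D ≤ t := by nlinarith
    have h5 : t * D ≤ t^4 := by nlinarith [mul_le_mul_of_nonneg_left hDt ht0.le, sq_nonneg t, sq_nonneg (t - 1), sq_nonneg (t + 1)]
    calc (t*D) ^ ((1:ℝ)/4) ≤ (t^4) ^ ((1:ℝ)/4) :=
          Real.rpow_le_rpow (by positivity) h5 (by norm_num)
    _ = t := rpow4_eq t ht0
  have hcP' := hcP μ t
  have s1 := osc_split hcP' 0 (π/2) (2*π)
  have s2 := osc_split hcP' (π/2) π (2*π)
  have s3 := osc_split hcP' π (3*π/2) (2*π)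
  have p1 := piece01 hε1 ht0 hμ
  have p2 := pieceNeg1 ht0 hts hD0
  have p3 := pieceNeg2 ht0 hts hD0
  have p4 := piece52 hε1 ht0 hμ
  have htot : ‖∫ x in (0:ℝ)..(2*π), E (P μ t) x‖ ≤
      3/((1-ε)*t) + 3/D + 3/D + 3/((1-ε)*t) := by
    linarith [s1, s2, s3, p1, p2, p3, p4]
  have e6 : 3/((1-ε)*t) ≤ 3 * (1-ε)⁻¹ * M := by
    rw [div_eq_mul_inv, mul_inv, ← mul_assoc]
    exact mul_le_mul_of_nonneg_left key2
      (mul_nonneg (by norm_num) (inv_nonneg.mpr h1e.le))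
  have e7 : 3/D ≤ 3 * M := by
    rw [div_eq_mul_inv]
    exact mul_le_mul_of_nonneg_left key1 (by norm_num)
  have hK : 1 ≤ (1-ε)⁻¹ := by
    rw [← one_div, le_div_iff₀ h1e]
    nlinarith
  have e9 : M ≤ (1-ε)⁻¹ * M := le_mul_of_one_le_left hM0.le hK
  linarith [htot, e6, e7, e9]

set_option maxHeartbeats 1000000 in
lemma boundB2 {ε μ t : ℝ} (hε0 : 0 < ε) (hε1 : ε < 1) (ht : 1 ≤ t) (hμ : (1 - ε) * t ≤ μ)
    (hts : μ < t) (hD : t ^ ((1:ℝ)/3) < t - μ) (hDε : t - μ ≤ ε * t) :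
    ‖∫ x in (0:ℝ)..(2*π), E (P μ t) x‖ ≤
      42 * (1-ε)⁻¹ * (t * (t - μ)) ^ (-(1/4) : ℝ) := by
  have hπ := Real.pi_gt_three
  have ht0 : (0:ℝ) < t := by linarith
  have h1e : (0:ℝ) < 1 - ε := by linarith
  set D := t - μ with hDdef
  have ht3 : (1:ℝ) ≤ t ^ ((1:ℝ)/3) := by
    have := Real.rpow_le_rpow zero_le_one ht (by norm_num : (0:ℝ) ≤ 1/3)
    simpa using this
  have hD1 : 1 ≤ D := by linarith
  have hD0 : 0 < D := by linarith
  have hcube : t ≤ D^3 := by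
    have h3 : (t ^ ((1:ℝ)/3))^3 = t := by
      rw [← Real.rpow_natCast (t ^ ((1:ℝ)/3)) 3, ← Real.rpow_mul ht0.le]
      norm_num
    have h4 : (t ^ ((1:ℝ)/3))^3 ≤ D^3 :=
      pow_le_pow_left₀ (by positivity) hD.le 3
    calc t = (t ^ ((1:ℝ)/3))^3 := h3.symm
    _ ≤ D^3 := h4
  set M := (t * D) ^ (-(1/4) : ℝ) with hM
  have hM0 : 0 < M := Real.rpow_pos_of_pos (by positivity) _
  have hMeq : M = ((t*D) ^ ((1:ℝ)/4))⁻¹ := by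
    rw [hM, ← Real.rpow_neg (by positivity)]
  have key1 : D⁻¹ ≤ M := by
    rw [hMeq]
    apply inv_anti₀ (Real.rpow_pos_of_pos (by positivity) _)
    calc (t*D) ^ ((1:ℝ)/4) ≤ (D^4) ^ ((1:ℝ)/4) :=
          Real.rpow_le_rpow (by positivity) (by nlinarith) (by norm_num)
    _ = D := rpow4_eq D hD0
  have key2 : t⁻¹ ≤ M := by
    rw [hMeq]
    apply inv_anti₀ (Real.rpow_pos_of_pos (by positivity) _)
    have hDt : D ≤ t := by nlinarith
    have h5 : t * D ≤ t^4 := by nlinarith [mul_le_mul_of_nonneg_left hDt ht0.le, sq_nonneg t, sq_nonneg (t - 1), sq_nonneg (t + 1)]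
    calc (t*D) ^ ((1:ℝ)/4) ≤ (t^4) ^ ((1:ℝ)/4) :=
          Real.rpow_le_rpow (by positivity) h5 (by norm_num)
    _ = t := rpow4_eq t ht0
  -- a0
  set a0 := Real.sqrt (D/t) with ha0def
  have ha00 : 0 < a0 := Real.sqrt_pos.mpr (by positivity)
  have ha01 : a0 ≤ 1 := by
    rw [show (1:ℝ) = Real.sqrt 1 from Real.sqrt_one.symm]
    apply Real.sqrt_le_sqrt
    rw [div_le_one ht0]
    nlinarith
  have hta0 : t * a0 = Real.sqrt (t*D) := by
    rw [show t*D = t^2*(D/t) by field_simp, Real.sqrt_mul (sq_nonneg t),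
      Real.sqrt_sq ht0.le]
  have e2 : Real.sqrt (t * a0 / 2) = (t*D) ^ ((1:ℝ)/4) / Real.sqrt 2 := by
    rw [hta0, Real.sqrt_div (Real.sqrt_nonneg _) 2]
    congr 1
    rw [Real.sqrt_eq_rpow, Real.sqrt_eq_rpow, ← Real.rpow_mul (by positivity)]
    norm_num
  have e5 : (8:ℝ) / Real.sqrt (t * a0 / 2) ≤ 12 * M := by
    rw [e2, div_div_eq_mul_div, div_eq_mul_inv, ← hMeq]
    nlinarith [hM0, sqrt2_le, Real.sqrt_nonneg 2]
  have hcP' := hcP μ t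
  have s1 := osc_split hcP' 0 (π/2) (2*π)
  have s2 := osc_split hcP' (π/2) (π - a0) (2*π)
  have s3 := osc_split hcP' (π - a0) π (2*π)
  have s4 := osc_split hcP' π (π + a0) (2*π)
  have s5 := osc_split hcP' (π + a0) (3*π/2) (2*π)
  have p1 := piece01 hε1 ht0 hμ
  have p2 := pieceOsc1 (μ := μ) ht0 ha00 ha01
  have p3 := pieceStat1 ht0 hts ha01
  have p4 := pieceStat2 ht0 hts ha01
  have p5 := pieceOsc2 (μ := μ) ht0 ha00 ha01
  have p6 := piece52 hε1 ht0 hμ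
  have htot : ‖∫ x in (0:ℝ)..(2*π), E (P μ t) x‖ ≤
      3/((1-ε)*t) + 8 / Real.sqrt (t * a0 / 2) + 6/D + 6/D
        + 8 / Real.sqrt (t * a0 / 2) + 3/((1-ε)*t) := by
    linarith [s1, s2, s3, s4, s5, p1, p2, p3, p4, p5, p6]
  have e6 : 3/((1-ε)*t) ≤ 3 * (1-ε)⁻¹ * M := by
    rw [div_eq_mul_inv, mul_inv, ← mul_assoc]
    exact mul_le_mul_of_nonneg_left key2
      (mul_nonneg (by norm_num) (inv_nonneg.mpr h1e.le))
  have e7 : 6/D ≤ 6 * M := by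
    rw [div_eq_mul_inv]
    exact mul_le_mul_of_nonneg_left key1 (by norm_num)
  have hK : 1 ≤ (1-ε)⁻¹ := by
    rw [← one_div, le_div_iff₀ h1e]
    nlinarith
  have e9 : M ≤ (1-ε)⁻¹ * M := le_mul_of_one_le_left hM0.le hK
  linarith [htot, e5, e6, e7, e9]

lemma besselJ_eq (m : ℤ) (t : ℝ) :
    ‖besselJ m t‖ = (1 / (2 * Real.pi)) *
      ‖∫ k in (0:ℝ)..(2 * Real.pi), E (P (m:ℝ) t) k‖ := by
  rw [besselJ, norm_mul]
  congr 1
  · rw [show ((1 : ℂ)/ (2 * (Real.pi:ℂ))) = ((1/(2*Real.pi) : ℝ) : ℂ) by push_cast; ring]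
    rw [Complex.norm_real, Real.norm_eq_abs, abs_of_pos (by positivity)]
  · congr 1
    apply intervalIntegral.integral_congr
    intro k _
    show Complex.exp _ = E (P (m:ℝ) t) k
    rw [E]
    apply congrArg Complex.exp
    simp only [P]
    push_cast
    ring

lemma normJ_le (m : ℤ) (t : ℝ) :
    ‖besselJ m t‖ ≤ ‖∫ k in (0:ℝ)..(2 * Real.pi), E (P (m:ℝ) t) k‖ := by
  rw [besselJ_eq]
  apply mul_le_of_le_one_left (norm_nonneg _)
  rw [div_le_one (by positivity)]
  linarith [Real.pi_gt_three]

lemma half_rpow {Y X : ℝ} (hY0 : 0 < Y) (hX : Y ≤ X) (hX2 : X ≤ 2*Y) :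
    (1/2) * Y ^ (-(1/4):ℝ) ≤ X ^ (-(1/4):ℝ) := by
  have h2 : (1:ℝ)/2 ≤ 2 ^ (-(1/4):ℝ) := by
    have ha : (2:ℝ) ^ ((1/4):ℝ) ≤ 2 := by
      calc (2:ℝ)^((1/4):ℝ) ≤ 2^(1:ℝ) :=
            Real.rpow_le_rpow_of_exponent_le (by norm_num) (by norm_num)
      _ = 2 := Real.rpow_one 2
    have hpos : (0:ℝ) < 2 ^ ((1/4):ℝ) := Real.rpow_pos_of_pos (by norm_num) _
    rw [Real.rpow_neg (by norm_num : (0:ℝ) ≤ 2), show (1:ℝ)/2 = 2⁻¹ by norm_num]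
    exact inv_anti₀ hpos ha
  calc (1/2) * Y ^ (-(1/4):ℝ) ≤ 2 ^ (-(1/4):ℝ) * Y ^ (-(1/4):ℝ) :=
      mul_le_mul_of_nonneg_right h2 (Real.rpow_nonneg hY0.le _)
  _ = (2*Y) ^ (-(1/4):ℝ) := (Real.mul_rpow (by norm_num) hY0.le).symm
  _ ≤ X ^ (-(1/4):ℝ) := Real.rpow_le_rpow_of_nonpos (by linarith) hX2 (by norm_num)

theorem statement1 (ε : ℝ) (hε0 : 0 < ε) (hε1 : ε < 1) :
    ∃ C : ℝ, 0 < C ∧ ∀ (m : ℤ) (t : ℝ), 1 ≤ t → |(m : ℝ) - t| < ε * t →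
      ‖besselJ m t‖ ≤ C * t ^ (-(1/4) : ℝ) *
        (t ^ ((1/3) : ℝ) + |(m : ℝ) - t|) ^ (-(1/4) : ℝ) := by
  have h1e : (0:ℝ) < 1 - ε := by linarith
  refine ⟨100 * (1-ε)⁻¹, mul_pos (by norm_num) (inv_pos.mpr h1e), fun m t ht hmt => ?_⟩
  have ht0 : (0:ℝ) < t := lt_of_lt_of_le one_pos ht
  set μ := ((m:ℝ)) with hμdef
  have habs := abs_lt.mp hmt
  have hμlow : (1-ε)*t ≤ μ := by nlinarith [habs.1]
  have hX0 : 0 < t ^ ((1:ℝ)/3) := Real.rpow_pos_of_pos ht0 _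
  have hJ := normJ_le m t
  have hKnn : (0:ℝ) ≤ (1-ε)⁻¹ := inv_nonneg.mpr h1e.le
  have htq : (0:ℝ) ≤ t ^ (-(1/4):ℝ) := Real.rpow_nonneg ht0.le _
  have hAnn : (0:ℝ) ≤ 100 * (1-ε)⁻¹ * t ^ (-(1/4):ℝ) :=
    mul_nonneg (mul_nonneg (by norm_num) hKnn) htq
  rcases le_or_gt (|μ - t|) (t ^ ((1:ℝ)/3)) with hcase | hcase
  · -- Case A
    have hbA := boundA (ε := ε) hε0 hε1 ht hμlow
    have e1 : t ^ (-(1/3):ℝ) = t ^ (-(1/4):ℝ) * t ^ (-(1/12):ℝ) := by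
      rw [← Real.rpow_add ht0]
      norm_num
    have hhalf : (1/2) * (t ^ ((1:ℝ)/3)) ^ (-(1/4):ℝ) ≤
        (t ^ ((1:ℝ)/3) + |μ - t|) ^ (-(1/4):ℝ) :=
      half_rpow hX0 (by linarith [abs_nonneg (μ - t)]) (by linarith)
    have e2 : (t ^ ((1:ℝ)/3)) ^ (-(1/4):ℝ) = t ^ (-(1/12):ℝ) := by
      rw [← Real.rpow_mul ht0.le]
      norm_num
    have hmono := mul_le_mul_of_nonneg_left hhalf hAnn
    rw [e2] at hmono
    have h50 : 100 * (1-ε)⁻¹ * t ^ (-(1/4):ℝ) * (1/2 * t ^ (-(1/12):ℝ))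
        = 50 * ((1-ε)⁻¹ * t ^ (-(1/3):ℝ)) := by
      rw [e1]; ring
    rw [h50] at hmono
    have hnn2 : (0:ℝ) ≤ (1-ε)⁻¹ * t ^ (-(1/3):ℝ) :=
      mul_nonneg hKnn (Real.rpow_nonneg ht0.le _)
    calc ‖besselJ m t‖ ≤ ‖∫ k in (0:ℝ)..(2*π), E (P μ t) k‖ := hJ
    _ ≤ 32 * (1-ε)⁻¹ * t ^ (-(1/3):ℝ) := hbA
    _ ≤ 100 * (1-ε)⁻¹ * t ^ (-(1/4):ℝ) * (t ^ ((1:ℝ)/3) + |μ - t|) ^ (-(1/4):ℝ) := by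
        linarith [hmono, hnn2]
  · -- Case B
    have hD0 : 0 < |μ - t| := lt_trans hX0 hcase
    have hhalf : (1/2) * (|μ - t|) ^ (-(1/4):ℝ) ≤
        (t ^ ((1:ℝ)/3) + |μ - t|) ^ (-(1/4):ℝ) :=
      half_rpow hD0 (by linarith [hX0]) (by linarith)
    have hmono := mul_le_mul_of_nonneg_left hhalf hAnn
    have e3 : (t * |μ - t|) ^ (-(1/4):ℝ) = t ^ (-(1/4):ℝ) * (|μ - t|) ^ (-(1/4):ℝ) :=
      Real.mul_rpow ht0.le (abs_nonneg _)
    have h50 : 100 * (1-ε)⁻¹ * t ^ (-(1/4):ℝ) * (1/2 * (|μ - t|) ^ (-(1/4):ℝ))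
        = 50 * ((1-ε)⁻¹ * (t ^ (-(1/4):ℝ) * (|μ - t|) ^ (-(1/4):ℝ))) := by ring
    rw [h50] at hmono
    have hnn2 : (0:ℝ) ≤ (1-ε)⁻¹ * (t * |μ - t|) ^ (-(1/4):ℝ) :=
      mul_nonneg hKnn (Real.rpow_nonneg (by positivity) _)
    rw [e3] at hnn2
    rcases le_or_gt t μ with hts | hts
    · have hDeq : |μ - t| = μ - t := abs_of_nonneg (by linarith)
      have hb := boundB1 hε0 hε1 ht hμlow hts (by rw [hDeq] at hcase; exact hcase)
        (by linarith [habs.2])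
      rw [← hDeq, e3] at hb
      calc ‖besselJ m t‖ ≤ ‖∫ k in (0:ℝ)..(2*π), E (P μ t) k‖ := hJ
      _ ≤ 12 * (1-ε)⁻¹ * (t ^ (-(1/4):ℝ) * (|μ - t|) ^ (-(1/4):ℝ)) := hb
      _ ≤ 100 * (1-ε)⁻¹ * t ^ (-(1/4):ℝ) * (t ^ ((1:ℝ)/3) + |μ - t|) ^ (-(1/4):ℝ) := by
          linarith [hmono, hnn2]
    · have hDeq : |μ - t| = t - μ := by
        rw [abs_sub_comm]
        exact abs_of_nonneg (by linarith)
      have hb := boundB2 hε0 hε1 ht hμlow hts (by rw [hDeq] at hcase; exact hcase)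
        (by linarith [habs.1])
      rw [← hDeq, e3] at hb
      calc ‖besselJ m t‖ ≤ ‖∫ k in (0:ℝ)..(2*π), E (P μ t) k‖ := hJ
      _ ≤ 42 * (1-ε)⁻¹ * (t ^ (-(1/4):ℝ) * (|μ - t|) ^ (-(1/4):ℝ)) := hb
      _ ≤ 100 * (1-ε)⁻¹ * t ^ (-(1/4):ℝ) * (t ^ ((1:ℝ)/3) + |μ - t|) ^ (-(1/4):ℝ) := by
          linarith [hmono, hnn2]
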